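/- Let α, β ∈ (0,1), n ∈ ℕ, n ≥ 1, let a₀,…,aₙ, b₁,…,b_{n+1}, k, k₀ ∈ ℝ with a_r k = b_{r+1} for r = 1,…,n, and set p(u) = Σ_{r=0}^n a_r u^r and q(u) = Σ_{r=1}^{n+1} b_r u^r. Then u(x,t) = k₀ E_α((a₀k² - b₁k) t^α) E_β(k x^β) is an exact solution of the time-space fractional diffusion–convection equation: for all x > 0 and t > 0, (C_t^α u)(x,t) = p'(u) ((C_x^β u)(x,t))² + p(u) (C_x^β (C_x^β u))(x,t) - q'(u) (C_x^β u)(x,t), where u = u(x,t). -/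

import Mathlib

/-- The two-parameter Mittag-Leffler function `E_{β,γ}(z) = Σ_{r=0}^∞ z^r / Γ(βr + γ)`. -/
noncomputable def mittagLeffler (β γ z : ℝ) : ℝ :=
  ∑' r : ℕ, z ^ r / Real.Gamma (β * r + γ)

/-- Caputo fractional partial derivative of order `α` with respect to `t`. -/
noncomputable def caputoT (α : ℝ) (u : ℝ → ℝ → ℝ) : ℝ → ℝ → ℝ := fun x t =>
  (1 / Real.Gamma (1 - α)) * ∫ s in (0:ℝ)..t, deriv (fun s' => u x s') s * (t - s) ^ (-α)

/-- Caputo fractional partial derivative of order `β` with respect to `x`. -/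
noncomputable def caputoX (β : ℝ) (u : ℝ → ℝ → ℝ) : ℝ → ℝ → ℝ := fun x t =>
  (1 / Real.Gamma (1 - β)) * ∫ y in (0:ℝ)..x, deriv (fun y' => u y' t) y * (x - y) ^ (-β)

/-- The exact solution `u(x,t) = k₀ E_α((a₀k² - b₁k) t^α) E_β(k x^β)`. -/
noncomputable def uSol (α β : ℝ) (a b : ℕ → ℝ) (k k₀ : ℝ) : ℝ → ℝ → ℝ := fun x t =>
  k₀ * mittagLeffler α 1 ((a 0 * k ^ 2 - b 1 * k) * t ^ α) * mittagLeffler β 1 (k * x ^ β)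

open MeasureTheory intervalIntegral Set Filter

lemma gamma_pos_ml (γ δ : ℝ) (hγ : 0 ≤ γ) (hδ : 0 < δ) (r : ℕ) :
    0 < Real.Gamma (γ * r + δ) :=
  Real.Gamma_pos_of_pos (by positivity)

lemma summable_ml (γ δ : ℝ) (hγ : 0 < γ) (hδ : 0 < δ) (z : ℝ) :
    Summable (fun r : ℕ => z ^ r / Real.Gamma (γ * r + δ)) := by
  have hΓ := gamma_pos_ml γ δ hγ.le hδ
  set Z : ℝ := max |z| 1 with hZdef
  have hZ1 : (1 : ℝ) ≤ Z := le_max_right _ _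
  have hZ0 : (0 : ℝ) < 2 * Z := by positivity
  set B : ℝ := (2 * Z) ^ (1 / γ) with hBdef
  have hB1 : (1 : ℝ) ≤ B := Real.one_le_rpow (by linarith) (by positivity)
  have hB0 : (0 : ℝ) < B := by linarith
  -- B ^ j / j! tends to zero
  have h0 : Tendsto (fun j : ℕ => B ^ j / (j.factorial : ℝ)) atTop (nhds 0) :=
    (Real.summable_pow_div_factorial B).tendsto_atTop_zero
  obtain ⟨M, hM⟩ : ∃ M : ℕ, ∀ j ≥ M, B ^ j / (j.factorial : ℝ) ≤ B⁻¹ ^ 2 := by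
    have := (h0.eventually (eventually_le_nhds (show (0:ℝ) < B⁻¹ ^ 2 by positivity)))
    exact this.exists_forall_of_atTop
  -- choose N
  obtain ⟨N, hN⟩ : ∃ N : ℕ, (M + 3 : ℝ) ≤ γ * N + δ := by
    obtain ⟨N, hN⟩ := exists_nat_ge ((M + 3) / γ)
    exact ⟨N, by rw [div_le_iff₀ hγ] at hN; nlinarith⟩
  -- bound for large r
  have key : ∀ r : ℕ, N ≤ r → |z| ^ r / Real.Gamma (γ * r + δ) ≤ (1 / 2) ^ r := by
    intro r hr
    have hx : (M + 3 : ℝ) ≤ γ * r + δ := by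
      refine hN.trans ?_
      have : (N : ℝ) ≤ r := Nat.cast_le.mpr hr
      nlinarith
    set x : ℝ := γ * r + δ with hxdef
    have hx2 : (2 : ℝ) ≤ x := by
      have : (0 : ℝ) ≤ M := Nat.cast_nonneg M
      linarith
    set m : ℕ := ⌊x⌋₊ with hmdef
    have hm2 : M + 2 ≤ m := Nat.le_floor (by push_cast; linarith)
    have hmx : (m : ℝ) ≤ x := Nat.floor_le (by linarith)
    have hxm : x ≤ m + 1 := (Nat.lt_floor_add_one x).le
    -- Gamma x ≥ (m-1)!
    have hmono : Real.Gamma (m : ℝ) ≤ Real.Gamma x := by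
      rcases eq_or_lt_of_le hmx with h | h
      · rw [h]
      · exact (Real.Gamma_strictMonoOn_Ici (mem_Ici.mpr (by exact_mod_cast (show (2:ℕ) ≤ m by omega)))
          (mem_Ici.mpr hx2) h).le
    have hfac : Real.Gamma (m : ℝ) = (m - 1).factorial := by
      have : ((m : ℝ)) = ((m - 1 : ℕ) : ℝ) + 1 := by
        have : 1 ≤ m := by omega
        push_cast [Nat.cast_sub this]; ring
      rw [this, Real.Gamma_nat_eq_factorial]
    -- (m-1)! ≥ B ^ (m+1)
    have hfb : B ^ (m + 1) ≤ ((m - 1).factorial : ℝ) := by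
      have h1 : B ^ (m - 1) / (m - 1).factorial ≤ B⁻¹ ^ 2 := hM (m - 1) (by omega)
      have hfpos : (0 : ℝ) < (m - 1).factorial := by positivity
      rw [div_le_iff₀ hfpos] at h1
      have : B ^ (m + 1) = B ^ (m - 1) * B ^ 2 := by
        rw [← pow_add]; congr 1; omega
      rw [this]
      calc B ^ (m - 1) * B ^ 2 ≤ (B⁻¹ ^ 2 * (m - 1).factorial) * B ^ 2 := by
            apply mul_le_mul_of_nonneg_right h1 (by positivity)
        _ = (m - 1).factorial * (B⁻¹ * B) ^ 2 := by ring
        _ = (m - 1).factorial := by rw [inv_mul_cancel₀ hB0.ne']; ring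
    -- B ^ (m+1) ≥ (2Z) ^ r
    have hbr : ((2 * Z) : ℝ) ^ r ≤ B ^ (m + 1) := by
      have h1 : ((2 * Z) : ℝ) ^ r = B ^ ((γ * r : ℝ)) := by
        rw [hBdef, ← Real.rpow_natCast (2 * Z) r, ← Real.rpow_mul hZ0.le]
        congr 1; field_simp
      rw [h1, ← Real.rpow_natCast B (m + 1)]
      apply Real.rpow_le_rpow_of_exponent_le hB1
      push_cast; nlinarith
    have hGamma_ge : ((2 * Z) : ℝ) ^ r ≤ Real.Gamma x := by
      calc ((2 * Z) : ℝ) ^ r ≤ B ^ (m + 1) := hbr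
        _ ≤ ((m - 1).factorial : ℝ) := hfb
        _ = Real.Gamma (m : ℝ) := hfac.symm
        _ ≤ Real.Gamma x := hmono
    have hΓx : (0 : ℝ) < Real.Gamma x := hΓ r
    have habs : |z| ^ r ≤ Z ^ r := pow_le_pow_left₀ (abs_nonneg z) (le_max_left _ _) r
    rw [div_le_iff₀ hΓx]
    calc |z| ^ r ≤ Z ^ r := habs
      _ = (1 / 2) ^ r * (2 * Z) ^ r := by rw [← mul_pow]; congr 1; ring
      _ ≤ (1 / 2) ^ r * Real.Gamma x := by
          apply mul_le_mul_of_nonneg_left hGamma_ge (by positivity)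
  -- conclude summability
  apply Summable.of_abs
  have habs : ∀ r : ℕ, |z ^ r / Real.Gamma (γ * r + δ)| = |z| ^ r / Real.Gamma (γ * r + δ) := by
    intro r; rw [abs_div, abs_pow, abs_of_pos (hΓ r)]
  simp_rw [habs]
  rw [← summable_nat_add_iff N]
  have hsum : Summable (fun r : ℕ => ((1:ℝ) / 2) ^ (r + N)) := by
    simpa [pow_add] using (summable_geometric_of_lt_one (by norm_num : (0:ℝ) ≤ 1/2)
      (by norm_num)).mul_right ((1 / 2 : ℝ) ^ N)
  refine Summable.of_nonneg_of_le (fun r => ?_) (fun r => key (r + N) (by omega)) hsum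
  have := hΓ (r + N); positivity

lemma beta_scaled (p q T : ℝ) (hp : 0 < p) (hq : 0 < q) (hT : 0 < T) :
    ∫ s in (0:ℝ)..T, s ^ (p - 1) * (T - s) ^ (q - 1)
      = Real.Gamma p * Real.Gamma q / Real.Gamma (p + q) * T ^ (p + q - 1) := by
  have h0T : (0:ℝ) ≤ T := hT.le
  have key : ((∫ s in (0:ℝ)..T, s ^ (p - 1) * (T - s) ^ (q - 1) : ℝ) : ℂ)
      = ∫ s in (0:ℝ)..T, (s : ℂ) ^ ((p:ℂ) - 1) * ((T:ℂ) - (s:ℂ)) ^ ((q:ℂ) - 1) := by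
    rw [← intervalIntegral.integral_ofReal]
    apply intervalIntegral.integral_congr
    intro s hs
    rw [uIcc_of_le h0T] at hs
    simp only
    rw [Complex.ofReal_mul, ← Complex.ofReal_sub,
      Complex.ofReal_cpow hs.1, Complex.ofReal_cpow (by linarith [hs.2] : (0:ℝ) ≤ T - s)]
    push_cast
    ring
  have hbeta := Complex.Gamma_mul_Gamma_eq_betaIntegral (s := (p:ℂ)) (t := (q:ℂ))
    (by simpa using hp) (by simpa using hq)
  have hΓ : Complex.Gamma ((p:ℂ) + (q:ℂ)) ≠ 0 := by
    rw [show ((p:ℂ) + (q:ℂ)) = ((p + q : ℝ) : ℂ) by push_cast; ring, Complex.Gamma_ofReal]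
    exact_mod_cast (Real.Gamma_pos_of_pos (by linarith)).ne'
  have hbeta' : Complex.betaIntegral (p:ℂ) (q:ℂ)
      = Complex.Gamma (p:ℂ) * Complex.Gamma (q:ℂ) / Complex.Gamma ((p:ℂ) + (q:ℂ)) := by
    rw [eq_div_iff hΓ]
    linear_combination -hbeta
  apply Complex.ofReal_injective
  rw [key, Complex.betaIntegral_scaled (p:ℂ) (q:ℂ) hT, hbeta']
  rw [show ((T:ℂ)) ^ ((p:ℂ) + (q:ℂ) - 1) = ((T ^ (p + q - 1) : ℝ) : ℂ) by
    rw [Complex.ofReal_cpow h0T]; push_cast; ring_nf]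
  rw [show ((p:ℂ) + (q:ℂ)) = ((p + q : ℝ) : ℂ) by push_cast; ring]
  simp only [Complex.Gamma_ofReal]
  push_cast
  ring

lemma beta_integrable (p q T : ℝ) (hp : 0 < p) (hq : 0 < q) (hT : 0 < T) :
    IntervalIntegrable (fun s => s ^ (p - 1) * (T - s) ^ (q - 1)) volume 0 T := by
  have h1 : IntervalIntegrable (fun s => s ^ (p - 1) * (T - s) ^ (q - 1)) volume 0 (T / 2) := by
    apply IntervalIntegrable.mul_continuousOn
    · exact intervalIntegral.intervalIntegrable_rpow' (by linarith)
    · apply ContinuousOn.rpow_const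
      · exact (continuous_const.sub continuous_id).continuousOn
      · intro s hs
        rw [uIcc_of_le (by linarith : (0:ℝ) ≤ T / 2)] at hs
        left
        intro h
        linarith [hs.2]
  have h2 : IntervalIntegrable (fun s => s ^ (p - 1) * (T - s) ^ (q - 1)) volume (T / 2) T := by
    apply IntervalIntegrable.continuousOn_mul (g := fun s => s ^ (p - 1))
    · have base : IntervalIntegrable (fun x : ℝ => x ^ (q - 1)) volume 0 (T / 2) :=
        intervalIntegral.intervalIntegrable_rpow' (by linarith)
      have := base.comp_sub_left T
      simpa [sub_zero, sub_half] using this.symm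
    · apply ContinuousOn.rpow_const continuousOn_id
      intro s hs
      rw [uIcc_of_le (by linarith : T / 2 ≤ T)] at hs
      left
      intro h
      simp only [id_eq] at h
      rw [h] at hs
      simp only [mem_Icc] at hs
      linarith [hs.1]
  exact h1.trans h2

lemma ml_deriv (γ : ℝ) (hγ0 : 0 < γ) (c K : ℝ) (s : ℝ) (hs : 0 < s) :
    HasDerivAt (fun s' => K * mittagLeffler γ 1 (c * s' ^ γ))
      (∑' r : ℕ, K * c ^ r / Real.Gamma (γ * r + 1) * (γ * r * s ^ (γ * r - 1))) s := by
  have hΓ1 : ∀ r : ℕ, 0 < Real.Gamma (γ * r + 1) := gamma_pos_ml γ 1 hγ0.le one_pos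
  set G : ℕ → ℝ → ℝ := fun r s => K * c ^ r / Real.Gamma (γ * r + 1) * s ^ (γ * r) with hG
  set G' : ℕ → ℝ → ℝ :=
    fun r s => K * c ^ r / Real.Gamma (γ * r + 1) * (γ * r * s ^ (γ * r - 1)) with hG'
  have hpt : ∀ y : ℝ, 0 < y → K * mittagLeffler γ 1 (c * y ^ γ) = ∑' r, G r y := by
    intro y hy
    rw [mittagLeffler, ← tsum_mul_left]
    apply tsum_congr
    intro r
    simp only [hG]
    rw [mul_pow, ← Real.rpow_natCast (y ^ γ) r, ← Real.rpow_mul hy.le]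
    ring
  have hsumG : Summable (fun r => G r s) := by
    apply Summable.congr ((summable_ml γ 1 hγ0 one_pos (c * s ^ γ)).mul_left K)
    intro r
    simp only [hG]
    rw [mul_pow, ← Real.rpow_natCast (s ^ γ) r, ← Real.rpow_mul hs.le]
    ring
  set S : Set ℝ := Ioo (s / 2) (2 * s) with hS
  have hsS : s ∈ S := ⟨by linarith, by linarith⟩
  set M : ℝ := max (2 * s) 1 with hM
  have hM1 : (1:ℝ) ≤ M := le_max_right _ _
  have hM0 : (0:ℝ) ≤ M := by linarith
  set A : ℝ := |c| * M ^ γ with hA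
  have hA0 : (0:ℝ) ≤ A := by positivity
  set u : ℕ → ℝ := fun r => Nat.casesOn r 0
    (fun r' => 2 / s * |K| * A ^ (r' + 1) / Real.Gamma (γ * r' + γ)) with hu
  have husum : Summable u := by
    rw [← summable_nat_add_iff 1]
    apply Summable.congr ((summable_ml γ γ hγ0 hγ0 A).mul_left (2 / s * |K| * A))
    intro n
    show 2 / s * |K| * A * (A ^ n / Real.Gamma (γ * n + γ))
      = 2 / s * |K| * A ^ (n + 1) / Real.Gamma (γ * n + γ)
    rw [pow_succ]
    ring
  have hterm : ∀ (r : ℕ), ∀ y ∈ S, HasDerivAt (G r) (G' r y) y := by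
    intro r y hy
    have hy0 : 0 < y := lt_trans (by linarith [hy.1] : (0:ℝ) < s / 2) hy.1
    exact (Real.hasDerivAt_rpow_const (Or.inl hy0.ne')).const_mul
      (K * c ^ r / Real.Gamma (γ * r + 1))
  have e1 : ∀ (r : ℕ) (y : ℝ), G' (r + 1) y
      = K * c ^ (r + 1) / Real.Gamma (γ * r + γ) * y ^ (γ * r + γ - 1) := by
    intro r y
    have harg : γ * ((r + 1 : ℕ) : ℝ) = γ * r + γ := by push_cast; ring
    have ha : (0:ℝ) < γ * r + γ := by positivity
    have hΓa : (0:ℝ) < Real.Gamma (γ * r + γ) := gamma_pos_ml γ γ hγ0.le hγ0 r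
    simp only [hG']
    rw [harg, Real.Gamma_add_one ha.ne']
    field_simp
  have hbound : ∀ (r : ℕ), ∀ y ∈ S, ‖G' r y‖ ≤ u r := by
    intro r y hy
    have hy0 : 0 < y := lt_trans (by linarith [hy.1] : (0:ℝ) < s / 2) hy.1
    match r with
    | 0 => simp [hG', hu]
    | (r + 1) =>
      have harg : γ * ((r + 1 : ℕ) : ℝ) = γ * r + γ := by push_cast; ring
      have ha : (0:ℝ) < γ * r + γ := by positivity
      have hΓa : (0:ℝ) < Real.Gamma (γ * r + γ) := gamma_pos_ml γ γ hγ0.le hγ0 r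
      have e2 : y ^ (γ * r + γ - 1) ≤ 2 / s * (M ^ γ) ^ (r + 1) := by
        have h1 : y ^ (γ * r + γ - 1) = y ^ (γ * r + γ) * y⁻¹ := by
          rw [show γ * r + γ - 1 = γ * r + γ + (-1) by ring, Real.rpow_add hy0,
            Real.rpow_neg_one]
        have h2 : y ^ (γ * r + γ) ≤ (M ^ γ) ^ (r + 1) := by
          have hyM : y ≤ M := le_trans hy.2.le (le_max_left _ _)
          have h2a : y ^ (γ * (r:ℝ) + γ) ≤ M ^ (γ * (r:ℝ) + γ) :=
            Real.rpow_le_rpow hy0.le hyM ha.le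
          have h2b : M ^ (γ * (r:ℝ) + γ) = (M ^ γ) ^ (r + 1) := by
            rw [← harg, Real.rpow_mul hM0, Real.rpow_natCast]
          rwa [h2b] at h2a
        have h3 : y⁻¹ ≤ 2 / s := by
          rw [inv_eq_one_div, div_le_div_iff₀ hy0 hs]
          linarith [hy.1]
        calc y ^ (γ * r + γ - 1) = y ^ (γ * r + γ) * y⁻¹ := h1
          _ ≤ (M ^ γ) ^ (r + 1) * (2 / s) :=
              mul_le_mul h2 h3 (inv_nonneg.mpr hy0.le) (by positivity)
          _ = 2 / s * (M ^ γ) ^ (r + 1) := mul_comm _ _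
      have hnorm : ‖G' (r + 1) y‖
          = |K| * |c| ^ (r + 1) / Real.Gamma (γ * r + γ) * y ^ (γ * r + γ - 1) := by
        rw [e1 r y, Real.norm_eq_abs, abs_mul, abs_div, abs_mul, abs_pow,
          abs_of_pos hΓa, abs_of_pos (Real.rpow_pos_of_pos hy0 _)]
      rw [hnorm]
      show _ ≤ 2 / s * |K| * A ^ (r + 1) / Real.Gamma (γ * r + γ)
      rw [hA, mul_pow]
      calc |K| * |c| ^ (r + 1) / Real.Gamma (γ * r + γ) * y ^ (γ * r + γ - 1)
          ≤ |K| * |c| ^ (r + 1) / Real.Gamma (γ * r + γ) * (2 / s * (M ^ γ) ^ (r + 1)) := by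
            apply mul_le_mul_of_nonneg_left e2 (by positivity)
        _ = 2 / s * |K| * (|c| ^ (r + 1) * (M ^ γ) ^ (r + 1)) / Real.Gamma (γ * r + γ) := by
            ring
  have hH := hasDerivAt_tsum_of_isPreconnected husum isOpen_Ioo isPreconnected_Ioo
    hterm hbound hsS hsumG hsS
  exact hH.congr_of_eventuallyEq
    (Filter.eventuallyEq_of_mem (isOpen_Ioi.mem_nhds hs) fun y hy => hpt y hy)

lemma caputo_ml (γ : ℝ) (hγ0 : 0 < γ) (hγ1 : γ < 1) (c K t : ℝ) (ht : 0 < t) :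
    (1 / Real.Gamma (1 - γ)) *
        ∫ s in (0:ℝ)..t, deriv (fun s' => K * mittagLeffler γ 1 (c * s' ^ γ)) s * (t - s) ^ (-γ)
      = c * (K * mittagLeffler γ 1 (c * t ^ γ)) := by
  have hΓ1 : ∀ r : ℕ, 0 < Real.Gamma (γ * r + 1) := gamma_pos_ml γ 1 hγ0.le one_pos
  have hΓγ : ∀ r : ℕ, 0 < Real.Gamma (γ * r + γ) := gamma_pos_ml γ γ hγ0.le hγ0
  have hb : (0:ℝ) < 1 - γ := by linarith
  have hΓ1γ : (0:ℝ) < Real.Gamma (1 - γ) := Real.Gamma_pos_of_pos hb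
  set G' : ℕ → ℝ → ℝ :=
    fun r s => K * c ^ r / Real.Gamma (γ * r + 1) * (γ * r * s ^ (γ * r - 1)) with hG'
  set f : ℕ → ℝ → ℝ := fun r s => G' r s * (t - s) ^ (-γ) with hf
  have e1 : ∀ (r : ℕ) (y : ℝ), G' (r + 1) y
      = K * c ^ (r + 1) / Real.Gamma (γ * r + γ) * y ^ (γ * r + γ - 1) := by
    intro r y
    have harg : γ * ((r + 1 : ℕ) : ℝ) = γ * r + γ := by push_cast; ring
    have ha : (0:ℝ) < γ * r + γ := by positivity
    simp only [hG']
    rw [harg, Real.Gamma_add_one ha.ne']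
    field_simp
  have hf0 : f 0 = fun _ => (0:ℝ) := by
    funext s; simp [hf, hG']
  have hfr : ∀ (r : ℕ), f (r + 1) = fun s => (K * c ^ (r + 1) / Real.Gamma (γ * r + γ))
      * (s ^ (γ * r + γ - 1) * (t - s) ^ ((1 - γ) - 1)) := by
    intro r; funext s
    simp only [hf]
    rw [e1 r s, show (1 - γ) - 1 = -γ by ring]
    ring
  -- beta values
  have hbval : ∀ r : ℕ, ∫ s in Ioo (0:ℝ) t, s ^ (γ * r + γ - 1) * (t - s) ^ ((1 - γ) - 1)
      = Real.Gamma (γ * r + γ) * Real.Gamma (1 - γ) / Real.Gamma (γ * r + 1) * t ^ (γ * r) := by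
    intro r
    rw [← integral_Ioc_eq_integral_Ioo, ← intervalIntegral.integral_of_le ht.le]
    rw [show γ * (r:ℝ) + γ - 1 = (γ * r + γ) - 1 by ring,
      beta_scaled (γ * r + γ) (1 - γ) t (by positivity) hb ht,
      show γ * (r:ℝ) + γ + (1 - γ) = γ * r + 1 by ring,
      show γ * (r:ℝ) + 1 - 1 = γ * r by ring]
  have hbint : ∀ r : ℕ, IntegrableOn
      (fun s => s ^ (γ * r + γ - 1) * (t - s) ^ ((1 - γ) - 1)) (Ioo 0 t) volume := by
    intro r
    have := (intervalIntegrable_iff_integrableOn_Ioo_of_le ht.le).mp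
      (beta_integrable (γ * r + γ) (1 - γ) t (by positivity) hb ht)
    simpa [show ∀ x:ℝ, γ * (r:ℝ) + γ - 1 = (γ * r + γ) - 1 from fun _ => by ring] using this
  have hInt : ∀ r : ℕ, IntegrableOn (f (r + 1)) (Ioo 0 t) volume := by
    intro r
    rw [hfr r]
    exact (hbint r).const_mul _
  -- values of each integral
  set V : ℕ → ℝ := fun r => Nat.casesOn r 0
    (fun r' => Real.Gamma (1 - γ) * (K * c ^ (r' + 1)) * t ^ (γ * r')
      / Real.Gamma (γ * r' + 1)) with hV
  set E : ℕ → ℝ := fun r => Nat.casesOn r 0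
    (fun r' => Real.Gamma (1 - γ) * (|K| * |c| ^ (r' + 1)) * t ^ (γ * r')
      / Real.Gamma (γ * r' + 1)) with hE
  have hval : ∀ r : ℕ, ∫ s in Ioo (0:ℝ) t, f (r + 1) s = V (r + 1) := by
    intro r
    rw [hfr r]
    simp only
    rw [MeasureTheory.integral_const_mul, hbval r]
    show K * c ^ (r + 1) / Real.Gamma (γ * r + γ)
        * (Real.Gamma (γ * r + γ) * Real.Gamma (1 - γ) / Real.Gamma (γ * r + 1) * t ^ (γ * r))
      = Real.Gamma (1 - γ) * (K * c ^ (r + 1)) * t ^ (γ * r) / Real.Gamma (γ * r + 1)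
    field_simp
  have hnormval : ∀ r : ℕ, ∫ s in Ioo (0:ℝ) t, ‖f (r + 1) s‖ = E (r + 1) := by
    intro r
    have hcongr : EqOn (fun s => ‖f (r + 1) s‖)
        (fun s => (|K| * |c| ^ (r + 1) / Real.Gamma (γ * r + γ))
          * (s ^ (γ * r + γ - 1) * (t - s) ^ ((1 - γ) - 1))) (Ioo 0 t) := by
      intro s hs
      simp only
      rw [hfr r]
      simp only [Real.norm_eq_abs]
      rw [abs_mul, abs_mul, abs_div, abs_mul, abs_pow, abs_of_pos (hΓγ r),
        abs_of_pos (Real.rpow_pos_of_pos hs.1 _),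
        abs_of_nonneg (Real.rpow_nonneg (by linarith [hs.2] : (0:ℝ) ≤ t - s) _)]
    rw [setIntegral_congr_fun measurableSet_Ioo hcongr,
      MeasureTheory.integral_const_mul, hbval r]
    show |K| * |c| ^ (r + 1) / Real.Gamma (γ * r + γ)
        * (Real.Gamma (γ * r + γ) * Real.Gamma (1 - γ) / Real.Gamma (γ * r + 1) * t ^ (γ * r))
      = Real.Gamma (1 - γ) * (|K| * |c| ^ (r + 1)) * t ^ (γ * r) / Real.Gamma (γ * r + 1)
    field_simp
  -- measurability
  have hmeas : ∀ r : ℕ, AEStronglyMeasurable (f r) (volume.restrict (Ioo 0 t)) := by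
    intro r
    apply ContinuousOn.aestronglyMeasurable _ measurableSet_Ioo
    apply ContinuousOn.mul
    · apply ContinuousOn.mul continuousOn_const
      apply ContinuousOn.mul continuousOn_const
      apply ContinuousOn.rpow_const continuousOn_id
      intro s hs
      exact Or.inl (ne_of_gt hs.1)
    · apply ContinuousOn.rpow_const (continuousOn_const.sub continuousOn_id)
      intro s hs
      exact Or.inl (sub_ne_zero.mpr (ne_of_gt hs.2))
  -- lintegral values
  have hL : ∀ r : ℕ, ∫⁻ s in Ioo (0:ℝ) t, ‖f r s‖₊ = ENNReal.ofReal (E r) := by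
    intro r
    match r with
    | 0 =>
      rw [hf0]
      simp [hE]
    | (r + 1) =>
      have h1 : ∫⁻ s in Ioo (0:ℝ) t, ‖f (r + 1) s‖₊
          = ∫⁻ s in Ioo (0:ℝ) t, ENNReal.ofReal ‖f (r + 1) s‖ := by
        simp_rw [ofReal_norm, enorm_eq_nnnorm]
      rw [h1, ← ofReal_integral_eq_lintegral_ofReal (hInt r).norm
        (Eventually.of_forall fun s => norm_nonneg _), hnormval r]
  have hEnonneg : ∀ r : ℕ, 0 ≤ E r := by
    intro r
    match r with
    | 0 => simp [hE]
    | (r + 1) =>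
      show 0 ≤ Real.Gamma (1 - γ) * (|K| * |c| ^ (r + 1)) * t ^ (γ * r) / Real.Gamma (γ * r + 1)
      have := hΓ1 r
      have := Real.rpow_pos_of_pos ht (γ * r)
      positivity
  have hEsum : Summable E := by
    rw [← summable_nat_add_iff 1]
    apply Summable.congr ((summable_ml γ 1 hγ0 one_pos (|c| * t ^ γ)).mul_left
      (Real.Gamma (1 - γ) * |K| * |c|))
    intro n
    show Real.Gamma (1 - γ) * |K| * |c| * ((|c| * t ^ γ) ^ n / Real.Gamma (γ * n + 1))
      = Real.Gamma (1 - γ) * (|K| * |c| ^ (n + 1)) * t ^ (γ * n) / Real.Gamma (γ * n + 1)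
    rw [mul_pow, ← Real.rpow_natCast (t ^ γ) n, ← Real.rpow_mul ht.le, pow_succ]
    ring
  have hVsum : Summable V := by
    rw [← summable_nat_add_iff 1]
    apply Summable.congr ((summable_ml γ 1 hγ0 one_pos (c * t ^ γ)).mul_left
      (Real.Gamma (1 - γ) * K * c))
    intro n
    show Real.Gamma (1 - γ) * K * c * ((c * t ^ γ) ^ n / Real.Gamma (γ * n + 1))
      = Real.Gamma (1 - γ) * (K * c ^ (n + 1)) * t ^ (γ * n) / Real.Gamma (γ * n + 1)
    rw [mul_pow, ← Real.rpow_natCast (t ^ γ) n, ← Real.rpow_mul ht.le, pow_succ]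
    ring
  -- main computation
  have hIoo : (∫ s in (0:ℝ)..t,
        deriv (fun s' => K * mittagLeffler γ 1 (c * s' ^ γ)) s * (t - s) ^ (-γ))
      = ∫ s in Ioo (0:ℝ) t, ∑' r, f r s := by
    rw [intervalIntegral.integral_of_le ht.le, integral_Ioc_eq_integral_Ioo]
    apply setIntegral_congr_fun measurableSet_Ioo
    intro s hs
    simp only
    rw [(ml_deriv γ hγ0 c K s hs.1).deriv, ← tsum_mul_right]
  have hswap : ∫ s in Ioo (0:ℝ) t, ∑' r, f r s = ∑' r, ∫ s in Ioo (0:ℝ) t, f r s := by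
    apply integral_tsum hmeas
    rw [show (fun i => ∫⁻ s in Ioo (0:ℝ) t, ‖f i s‖ₑ) = fun i => ENNReal.ofReal (E i) from
      funext hL]
    rw [← ENNReal.ofReal_tsum_of_nonneg hEnonneg hEsum]
    exact ENNReal.ofReal_ne_top
  have hsumint : (∑' r, ∫ s in Ioo (0:ℝ) t, f r s) = ∑' r, V r := by
    apply tsum_congr
    intro r
    match r with
    | 0 =>
      rw [hf0]
      simp [hV]
    | (r + 1) => exact hval r
  have htsumV : (∑' r, V r) = Real.Gamma (1 - γ) * c * (K * mittagLeffler γ 1 (c * t ^ γ)) := by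
    rw [Summable.tsum_eq_zero_add hVsum]
    have hV0 : V 0 = 0 := rfl
    rw [hV0, zero_add, mittagLeffler,
      show Real.Gamma (1 - γ) * c * (K * ∑' (r : ℕ), (c * t ^ γ) ^ r / Real.Gamma (γ * r + 1))
        = (Real.Gamma (1 - γ) * c * K) * ∑' (r : ℕ), (c * t ^ γ) ^ r / Real.Gamma (γ * r + 1)
        from by ring, ← tsum_mul_left]
    apply tsum_congr
    intro r
    show Real.Gamma (1 - γ) * (K * c ^ (r + 1)) * t ^ (γ * r) / Real.Gamma (γ * r + 1)
      = Real.Gamma (1 - γ) * c * K * ((c * t ^ γ) ^ r / Real.Gamma (γ * r + 1))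
    rw [mul_pow, ← Real.rpow_natCast (t ^ γ) r, ← Real.rpow_mul ht.le, pow_succ]
    ring
  rw [hIoo, hswap, hsumint, htsumV]
  field_simp

lemma algebra_id (n : ℕ) (hn : 1 ≤ n) (a b : ℕ → ℝ) (k u : ℝ)
    (hab : ∀ r : ℕ, 1 ≤ r → r ≤ n → a r * k = b (r + 1)) :
    (∑ r ∈ Finset.Icc 1 n, (r : ℝ) * a r * u ^ (r - 1)) * (k * u) ^ 2
      + (∑ r ∈ Finset.range (n + 1), a r * u ^ r) * (k ^ 2 * u)
      - (∑ r ∈ Finset.Icc 1 (n + 1), (r : ℝ) * b r * u ^ (r - 1)) * (k * u)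
    = (a 0 * k ^ 2 - b 1 * k) * u := by
  induction n with
  | zero => omega
  | succ m ih =>
    by_cases hm : 1 ≤ m
    · have IH := ih hm (fun r h1 h2 => hab r h1 (by omega))
      have hb2 : a (m + 1) * k = b (m + 2) := hab (m + 1) (by omega) (by omega)
      rw [Finset.sum_Icc_succ_top (by omega : 1 ≤ m + 1),
        Finset.sum_range_succ,
        Finset.sum_Icc_succ_top (by omega : 1 ≤ m + 1 + 1)]
      simp only [Nat.add_sub_cancel]
      push_cast
      linear_combination IH + ((m : ℝ) + 2) * u ^ (m + 1) * (k * u) * hb2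
    · have hm0 : m = 0 := by omega
      subst hm0
      have hb2 : a 1 * k = b 2 := hab 1 (by omega) (by omega)
      simp [Finset.sum_Icc_succ_top, Finset.Icc_self, Finset.sum_range_succ]
      linear_combination (2 : ℝ) * u * (k * u) * hb2


/-- **Exact solution of the time-space fractional diffusion–convection equation.**
With `p(u) = Σ_{r=0}^n aᵣ uʳ`, `q(u) = Σ_{r=1}^{n+1} bᵣ uʳ`, and `aᵣ k = b_{r+1}` for
`r = 1,…,n`, the function `u(x,t) = k₀ E_α((a₀k² - b₁k)t^α) E_β(k x^β)` satisfies
`C_t^α u = p'(u) (C_x^β u)² + p(u) C_x^β(C_x^β u) - q'(u) C_x^β u` for `x, t > 0`. -/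
theorem fractional_diffusion_convection_exact (α β : ℝ)
    (hα : α ∈ Set.Ioo (0 : ℝ) 1) (hβ : β ∈ Set.Ioo (0 : ℝ) 1)
    (n : ℕ) (hn : 1 ≤ n) (a b : ℕ → ℝ) (k k₀ : ℝ)
    (hab : ∀ r : ℕ, 1 ≤ r → r ≤ n → a r * k = b (r + 1)) :
    ∀ x : ℝ, 0 < x → ∀ t : ℝ, 0 < t →
      caputoT α (uSol α β a b k k₀) x t =
        (∑ r ∈ Finset.Icc 1 n, (r : ℝ) * a r * (uSol α β a b k k₀ x t) ^ (r - 1)) *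
            (caputoX β (uSol α β a b k k₀) x t) ^ 2
          + (∑ r ∈ Finset.range (n + 1), a r * (uSol α β a b k k₀ x t) ^ r) *
            caputoX β (caputoX β (uSol α β a b k k₀)) x t
          - (∑ r ∈ Finset.Icc 1 (n + 1), (r : ℝ) * b r * (uSol α β a b k k₀ x t) ^ (r - 1)) *
            caputoX β (uSol α β a b k k₀) x t := by
  obtain ⟨hα0, hα1⟩ := hα
  obtain ⟨hβ0, hβ1⟩ := hβ
  intro x hx t ht
  -- time Caputo derivative
  have hT : caputoT α (uSol α β a b k k₀) x t
      = (a 0 * k ^ 2 - b 1 * k) * uSol α β a b k k₀ x t := by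
    have hfun : (fun s' => uSol α β a b k k₀ x s')
        = fun s' => (k₀ * mittagLeffler β 1 (k * x ^ β))
            * mittagLeffler α 1 ((a 0 * k ^ 2 - b 1 * k) * s' ^ α) := by
      funext s'
      simp only [uSol]
      try ring
    simp only [caputoT, hfun]
    rw [caputo_ml α hα0 hα1 (a 0 * k ^ 2 - b 1 * k)
      (k₀ * mittagLeffler β 1 (k * x ^ β)) t ht]
    try simp only [uSol]
    try ring
  -- space Caputo derivative
  have hX : ∀ x' : ℝ, 0 < x' → caputoX β (uSol α β a b k k₀) x' t
      = k * uSol α β a b k k₀ x' t := by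
    intro x' hx'
    have hfun : (fun y' => uSol α β a b k k₀ y' t)
        = fun y' => (k₀ * mittagLeffler α 1 ((a 0 * k ^ 2 - b 1 * k) * t ^ α))
            * mittagLeffler β 1 (k * y' ^ β) := by
      funext y'
      simp only [uSol]
      try ring
    simp only [caputoX, hfun]
    rw [caputo_ml β hβ0 hβ1 k
      (k₀ * mittagLeffler α 1 ((a 0 * k ^ 2 - b 1 * k) * t ^ α)) x' hx']
    try simp only [uSol]
    try ring
  -- second space Caputo derivative
  have hXX : caputoX β (caputoX β (uSol α β a b k k₀)) x t
      = k ^ 2 * uSol α β a b k k₀ x t := by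
    have h2 : caputoX β (caputoX β (uSol α β a b k k₀)) x t
        = (1 / Real.Gamma (1 - β)) * ∫ y in (0:ℝ)..x,
            deriv (fun y' => (k * (k₀ * mittagLeffler α 1 ((a 0 * k ^ 2 - b 1 * k) * t ^ α)))
              * mittagLeffler β 1 (k * y' ^ β)) y * (x - y) ^ (-β) := by
      simp only [caputoX]
      congr 1
      rw [intervalIntegral.integral_of_le hx.le, intervalIntegral.integral_of_le hx.le]
      apply setIntegral_congr_fun measurableSet_Ioc
      intro y hy
      simp only
      congr 1
      apply Filter.EventuallyEq.deriv_eq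
      apply Filter.eventuallyEq_of_mem (isOpen_Ioi.mem_nhds hy.1)
      intro y' hy'
      have := hX y' hy'
      simp only [caputoX] at this ⊢
      rw [this]
      simp only [uSol]
      try ring
    rw [h2, caputo_ml β hβ0 hβ1 k
      (k * (k₀ * mittagLeffler α 1 ((a 0 * k ^ 2 - b 1 * k) * t ^ α))) x hx]
    try simp only [uSol]
    try ring
  rw [hT, hX x hx, hXX]
  have halg := algebra_id n hn a b k (uSol α β a b k k₀ x t) hab
  linear_combination -halg
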